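/- There exist a definite logic program P and goals that have the same ground refutations but different sets of computed answer substitutions; concretely, over a language with a constant a, a variable x, and distinct unary predicate symbols p and q, let P consist of the three facts p(x), p(a), and q(x). Then: (i) for every ground substitution σ, the ground goal σ;p(x) has a refutation from P using ground instances of clauses if and only if σ;q(x) does (indeed both always do); but (ii) the set of computed answer substitutions of the goal p(x) under SLD-resolution is {ε, [a/x]} while that of q(x) is {ε} (where ε is the empty substitution), so the two sets differ. Hence the equivalence by computed answer substitutions is strictly finer than the equivalence by ground refutations. -/

import Mathlib

open FirstOrder FirstOrder.Language

/-- An atomic formula: a predicate symbol applied to terms over the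
variables `ℕ`. -/
structure LPAtom (L : FirstOrder.Language) where
  arity : ℕ
  pred : L.Relations arity
  args : Fin arity → L.Term ℕ

variable {L : FirstOrder.Language}

/-- Applying a substitution to an atom. -/
def asubst (A : LPAtom L) (σ : ℕ → L.Term ℕ) : LPAtom L :=
  ⟨A.arity, A.pred, fun i => (A.args i).subst σ⟩

/-- The variables occurring in an atom. -/
def avars (A : LPAtom L) : Finset ℕ :=
  Finset.univ.biUnion fun i : Fin A.arity => (A.args i).varFinset

/-- A goal is a finite list of atoms. -/
abbrev LPGoal (L : FirstOrder.Language) := List (LPAtom L)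

/-- Applying a substitution to a goal. -/
def gsubst (G : LPGoal L) (σ : ℕ → L.Term ℕ) : LPGoal L :=
  G.map fun A => asubst A σ

/-- The variables occurring in a goal. -/
def gvars (G : LPGoal L) : Finset ℕ :=
  G.foldr (fun A s => avars A ∪ s) ∅

/-- A goal is ground if no variables occur in it. -/
def gGround (G : LPGoal L) : Prop := ∀ A ∈ G, avars A = ∅

/-- A definite Horn clause `head :- body`. -/
structure LPClause (L : FirstOrder.Language) where
  head : LPAtom L
  body : LPGoal L

/-- The variables occurring in a clause. -/
def cvars (c : LPClause L) : Finset ℕ := avars c.head ∪ gvars c.body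

/-- Applying a substitution to a clause. -/
def csubst (c : LPClause L) (σ : ℕ → L.Term ℕ) : LPClause L :=
  ⟨asubst c.head σ, gsubst c.body σ⟩

/-- A definite logic program: a finite collection (list) of clauses. -/
abbrev LPProgram (L : FirstOrder.Language) := List (LPClause L)

/-- The substitution induced by a variable renaming `ρ`. -/
def renSubst (ρ : ℕ → ℕ) : ℕ → L.Term ℕ := fun v => Term.var (ρ v)

/-- `ρ` renames the variables of the clause `c` apart from the goal `G`. -/
def RenamesApart (ρ : ℕ → ℕ) (c : LPClause L) (G : LPGoal L) : Prop :=
  Function.Injective ρ ∧ ∀ v ∈ cvars c, ρ v ∉ gvars G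

/-- `θ` is a most general unifier of the atoms `A` and `B`. -/
def IsMguAtom (A B : LPAtom L) (θ : ℕ → L.Term ℕ) : Prop :=
  asubst A θ = asubst B θ ∧
    ∀ η : ℕ → L.Term ℕ, asubst A η = asubst B η →
      ∃ δ : ℕ → L.Term ℕ, ∀ v : ℕ, η v = (θ v).subst δ

/-- Ground refutation (semantics (1)): the goal must be ground, and a
resolution step replaces a selected atom by the body of a ground instance of a
program clause whose head equals the selected atom. -/
inductive GroundRef (P : LPProgram L) : LPGoal L → Prop
  | nil : GroundRef P []
  | step {G₁ G₂ : LPGoal L} {c : LPClause L} {σ : ℕ → L.Term ℕ}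
      (hc : c ∈ P)
      (hclause : gGround (asubst c.head σ :: gsubst c.body σ))
      (hgoal : gGround (G₁ ++ asubst c.head σ :: G₂))
      (hrest : GroundRef P (G₁ ++ gsubst c.body σ ++ G₂)) :
      GroundRef P (G₁ ++ asubst c.head σ :: G₂)

/-- Refutation with arbitrary common instances (semantics (2)): a resolution
step applies any substitution `σ` with `σ;A = σ;ρ;H` for a renamed-apart
clause `H :- B` of the program, and records `σ`; the recorded answer of a
refutation is the composition of the step substitutions. -/
inductive Ref2 (P : LPProgram L) : LPGoal L → (ℕ → L.Term ℕ) → Prop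
  | nil : Ref2 P [] Term.var
  | step {G₁ G₂ : LPGoal L} {A : LPAtom L} {c : LPClause L} {ρ : ℕ → ℕ}
      {σ θ : ℕ → L.Term ℕ}
      (hc : c ∈ P)
      (hρ : RenamesApart ρ c (G₁ ++ A :: G₂))
      (hinst : asubst A σ = asubst (asubst c.head (renSubst ρ)) σ)
      (hrest : Ref2 P (gsubst (G₁ ++ gsubst c.body (renSubst ρ) ++ G₂) σ) θ) :
      Ref2 P (G₁ ++ A :: G₂) (fun v => (σ v).subst θ)

/-- SLD-refutation (semantics (3)): a resolution step uses a most general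
unifier `θ` of the selected atom and the head of a renamed-apart program
clause; the computed answer of a refutation is the composition of the step
mgus. -/
inductive SLD (P : LPProgram L) : LPGoal L → (ℕ → L.Term ℕ) → Prop
  | nil : SLD P [] Term.var
  | step {G₁ G₂ : LPGoal L} {A : LPAtom L} {c : LPClause L} {ρ : ℕ → ℕ}
      {θ θ' : ℕ → L.Term ℕ}
      (hc : c ∈ P)
      (hρ : RenamesApart ρ c (G₁ ++ A :: G₂))
      (hmgu : IsMguAtom A (asubst c.head (renSubst ρ)) θ)
      (hrest : SLD P (gsubst (G₁ ++ gsubst c.body (renSubst ρ) ++ G₂) θ) θ') :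
      SLD P (G₁ ++ A :: G₂) (fun v => (θ v).subst θ')

/-- The function symbols occurring in a term. -/
def tfuncs : L.Term ℕ → Set (Σ n, L.Functions n)
  | Term.var _ => ∅
  | Term.func f ts => insert ⟨_, f⟩ (⋃ i, tfuncs (ts i))

/-- The function symbols occurring in an atom. -/
def afuncs (A : LPAtom L) : Set (Σ n, L.Functions n) :=
  ⋃ i : Fin A.arity, tfuncs (A.args i)

/-- The function symbols occurring in a clause. -/
def cfuncs (c : LPClause L) : Set (Σ n, L.Functions n) :=
  afuncs c.head ∪ ⋃ A ∈ c.body, afuncs A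

/-- A language with a single constant symbol `a` and two distinct unary
predicate symbols `p` (encoded `true`) and `q` (encoded `false`). -/
def L13 : FirstOrder.Language where
  Functions := fun n => match n with | 0 => Unit | _ => Empty
  Relations := fun n => match n with | 1 => Bool | _ => Empty

/-- The constant symbol `a`. -/
def aSym : L13.Functions 0 := ()

/-- The ground term `a`. -/
def aT : L13.Term ℕ := Term.func aSym Fin.elim0

/-- The atom `p(t)`. -/
def pAtom (t : L13.Term ℕ) : LPAtom L13 :=
  ⟨1, (true : L13.Relations 1), fun _ => t⟩

/-- The atom `q(t)`. -/
def qAtom (t : L13.Term ℕ) : LPAtom L13 :=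
  ⟨1, (false : L13.Relations 1), fun _ => t⟩

/-- The program consisting of the three facts `p(x)`, `p(a)`, `q(x)`,
where `x` is the variable `0`. -/
def P13 : LPProgram L13 :=
  [⟨pAtom (Term.var 0), []⟩, ⟨pAtom aT, []⟩, ⟨qAtom (Term.var 0), []⟩]

/-- For the program `P13 = {p(x)., p(a)., q(x).}`:
(i) every ground instance of the goal `p(x)` has a ground refutation, and so
does every ground instance of `q(x)` (in particular they have the same ground
refutable instances); but
(ii) `p(x)` has a computed answer substitution mapping `x` to `a` as well as
one mapping `x` to a variable (i.e. `ε` up to renaming), while every computed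
answer substitution of `q(x)` maps `x` to a variable, so the two sets of
computed answer substitutions differ.  Hence equivalence by computed answer
substitutions is strictly finer than equivalence by ground refutations. -/

lemma subst_var_id (t : L13.Term ℕ) : t.subst Term.var = t := by
  induction t with
  | var v => rfl
  | func f ts ih => simp only [Term.subst]; congr 1; funext i; exact ih i

lemma subst_eq_var {t : L13.Term ℕ} {δ : ℕ → L13.Term ℕ} {y : ℕ}
    (h : t.subst δ = Term.var y) : ∃ v, t = Term.var v := by
  cases t with
  | var v => exact ⟨v, rfl⟩
  | func f ts => simp [Term.subst] at h

lemma aT_eq (u : L13.Functions 0) (f : Fin 0 → L13.Term ℕ) :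
    Term.func u f = aT := by
  unfold aT
  congr 1
  funext i
  exact i.elim0

lemma aT_subst (δ : ℕ → L13.Term ℕ) : aT.subst δ = aT := aT_eq _ _

lemma pAtom_inj {s t : L13.Term ℕ} (h : pAtom s = pAtom t) : s = t := by
  injection h with h1 h2 h3
  exact congrFun h3 0

lemma qAtom_inj {s t : L13.Term ℕ} (h : qAtom s = qAtom t) : s = t := by
  injection h with h1 h2 h3
  exact congrFun h3 0

lemma sld_nil_inv {G : LPGoal L13} {θ : ℕ → L13.Term ℕ}
    (h : SLD P13 G θ) (hG : G = []) : θ = Term.var := by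
  cases h with
  | nil => rfl
  | step hc hρ hmgu hrest => simp at hG

lemma sld_q_inv {G : LPGoal L13} {θ : ℕ → L13.Term ℕ}
    (h : SLD P13 G θ) (hG : G = [qAtom (Term.var 0)]) :
    ∃ y : ℕ, θ 0 = Term.var y := by
  cases h with
  | nil => simp at hG
  | @step G₁ G₂ A c ρ θ₀ θ' hc hρ hmgu hrest =>
    cases G₁ with
    | cons b l => simp at hG
    | nil =>
      simp at hG
      obtain ⟨hA, hG₂⟩ := hG
      subst hA; subst hG₂
      simp [P13] at hc
      rcases hc with hc | hc | hc
      · exfalso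
        have hu := hmgu.1
        rw [hc] at hu
        simp [asubst, qAtom, pAtom] at hu
        injection hu with h1 h2
        exact Bool.false_ne_true h2
      · exfalso
        have hu := hmgu.1
        rw [hc] at hu
        simp [asubst, qAtom, pAtom] at hu
        injection hu with h1 h2
        exact Bool.false_ne_true h2
      · subst hc
        obtain ⟨δ, hδ⟩ := hmgu.2 (fun _ => Term.var 0) rfl
        obtain ⟨y, hy⟩ := subst_eq_var (hδ 0).symm
        have hθ' : θ' = Term.var := sld_nil_inv hrest rfl
        refine ⟨y, ?_⟩
        show (θ₀ 0).subst θ' = Term.var y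
        rw [hθ', subst_var_id, hy]

theorem ground_equiv_not_computed_equiv :
    (∀ σ : ℕ → L13.Term ℕ, (∀ v, (σ v).varFinset = ∅) →
      (GroundRef P13 (gsubst [pAtom (Term.var 0)] σ) ∧
       GroundRef P13 (gsubst [qAtom (Term.var 0)] σ))) ∧
    (∃ θ, SLD P13 [pAtom (Term.var 0)] θ ∧ θ 0 = aT) ∧
    (∃ θ, SLD P13 [pAtom (Term.var 0)] θ ∧ ∃ y : ℕ, θ 0 = Term.var y) ∧
    (∃ θ, SLD P13 [qAtom (Term.var 0)] θ ∧ ∃ y : ℕ, θ 0 = Term.var y) ∧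
    (∀ θ, SLD P13 [qAtom (Term.var 0)] θ → ∃ y : ℕ, θ 0 = Term.var y) ∧
    {t : L13.Term ℕ | ∃ θ, SLD P13 [pAtom (Term.var 0)] θ ∧ θ 0 = t} ≠
      {t : L13.Term ℕ | ∃ θ, SLD P13 [qAtom (Term.var 0)] θ ∧ θ 0 = t} := by
  have hpa : ∃ θ, SLD P13 [pAtom (Term.var 0)] θ ∧ θ 0 = aT := by
    set θa : ℕ → L13.Term ℕ := fun v => if v = 0 then aT else Term.var v with hθa
    refine ⟨fun v => (θa v).subst Term.var, ?_, ?_⟩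
    · have h := SLD.step (P := P13) (G₁ := []) (G₂ := [])
        (A := pAtom (Term.var 0)) (c := ⟨pAtom aT, []⟩) (ρ := id)
        (θ := θa) (θ' := Term.var) (by simp [P13])
        ⟨fun a b hab => hab, by
          intro v hv
          simp [cvars, avars, gvars, pAtom, aT, Term.varFinset] at hv⟩
        ⟨by
          show pAtom ((Term.var 0).subst θa) =
            pAtom ((aT.subst (renSubst id)).subst θa)
          rw [aT_subst, aT_subst]
          show pAtom (θa 0) = pAtom aT
          rw [show θa 0 = aT from if_pos rfl], by
          intro η hη
          have hη' : pAtom (η 0) = pAtom ((aT.subst (renSubst id)).subst η) := hη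
          rw [aT_subst, aT_subst] at hη'
          have h0 : η 0 = aT := pAtom_inj hη'
          refine ⟨η, fun v => ?_⟩
          by_cases hv : v = 0
          · subst hv
            show η 0 = (θa 0).subst η
            rw [show θa 0 = aT from if_pos rfl, aT_subst]; exact h0
          · show η v = (θa v).subst η
            rw [show θa v = Term.var v from if_neg hv]; exact rfl⟩
        SLD.nil
      exact h
    · show (θa 0).subst Term.var = aT
      have h0 : θa 0 = aT := if_pos rfl
      rw [h0, aT_subst]
  have hpv : ∃ θ, SLD P13 [pAtom (Term.var 0)] θ ∧ ∃ y : ℕ, θ 0 = Term.var y := by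
    set θv : ℕ → L13.Term ℕ := fun v => if v = 0 then Term.var 1 else Term.var v with hθv
    refine ⟨fun v => (θv v).subst Term.var, ?_, 1, ?_⟩
    · have h := SLD.step (P := P13) (G₁ := []) (G₂ := [])
        (A := pAtom (Term.var 0)) (c := ⟨pAtom (Term.var 0), []⟩)
        (ρ := Nat.succ) (θ := θv) (θ' := Term.var) (by simp [P13])
        ⟨Nat.succ_injective, by
          intro v hv
          simp [cvars, avars, gvars, pAtom, Term.varFinset] at hv ⊢⟩
        ⟨by
          show pAtom (θv 0) = pAtom (θv 1)
          rw [show θv 0 = Term.var 1 from if_pos rfl,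
            show θv 1 = Term.var 1 from if_neg one_ne_zero], by
          intro η hη
          have h01 : η 0 = η 1 := pAtom_inj hη
          refine ⟨η, fun v => ?_⟩
          by_cases hv : v = 0
          · subst hv
            show η 0 = (θv 0).subst η
            rw [show θv 0 = Term.var 1 from if_pos rfl]; exact h01
          · show η v = (θv v).subst η
            rw [show θv v = Term.var v from if_neg hv]; exact rfl⟩
        SLD.nil
      exact h
    · show (θv 0).subst Term.var = Term.var 1
      rw [show θv 0 = Term.var 1 from if_pos rfl]; exact rfl
  have hqv : ∃ θ, SLD P13 [qAtom (Term.var 0)] θ ∧ ∃ y : ℕ, θ 0 = Term.var y := by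
    set θv : ℕ → L13.Term ℕ := fun v => if v = 0 then Term.var 1 else Term.var v with hθv
    refine ⟨fun v => (θv v).subst Term.var, ?_, 1, ?_⟩
    · have h := SLD.step (P := P13) (G₁ := []) (G₂ := [])
        (A := qAtom (Term.var 0)) (c := ⟨qAtom (Term.var 0), []⟩)
        (ρ := Nat.succ) (θ := θv) (θ' := Term.var) (by simp [P13])
        ⟨Nat.succ_injective, by
          intro v hv
          simp [cvars, avars, gvars, qAtom, Term.varFinset] at hv ⊢⟩
        ⟨by
          show qAtom (θv 0) = qAtom (θv 1)
          rw [show θv 0 = Term.var 1 from if_pos rfl,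
            show θv 1 = Term.var 1 from if_neg one_ne_zero], by
          intro η hη
          have h01 : η 0 = η 1 := qAtom_inj hη
          refine ⟨η, fun v => ?_⟩
          by_cases hv : v = 0
          · subst hv
            show η 0 = (θv 0).subst η
            rw [show θv 0 = Term.var 1 from if_pos rfl]; exact h01
          · show η v = (θv v).subst η
            rw [show θv v = Term.var v from if_neg hv]; exact rfl⟩
        SLD.nil
      exact h
    · show (θv 0).subst Term.var = Term.var 1
      rw [show θv 0 = Term.var 1 from if_pos rfl]; exact rfl
  have hqall : ∀ θ, SLD P13 [qAtom (Term.var 0)] θ → ∃ y : ℕ, θ 0 = Term.var y :=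
    fun θ h => sld_q_inv h rfl
  refine ⟨?_, hpa, hpv, hqv, hqall, ?_⟩
  · intro σ hσ
    have hg : ∀ t : L13.Term ℕ, t.varFinset = ∅ →
        ∀ b : Bool, avars (⟨1, b, fun _ => t⟩ : LPAtom L13) = ∅ := by
      intro t ht b
      simp [avars, Finset.eq_empty_iff_forall_notMem, Finset.mem_biUnion, ht]
    constructor
    · exact GroundRef.step (P := P13) (G₁ := []) (G₂ := [])
        (c := ⟨pAtom (Term.var 0), []⟩) (σ := σ) (by simp [P13])
        (by intro A hA; simp [gsubst] at hA; subst hA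
            exact hg _ (hσ 0) _)
        (by intro A hA; simp [gsubst] at hA; subst hA
            exact hg _ (hσ 0) _)
        GroundRef.nil
    · exact GroundRef.step (P := P13) (G₁ := []) (G₂ := [])
        (c := ⟨qAtom (Term.var 0), []⟩) (σ := σ) (by simp [P13])
        (by intro A hA; simp [gsubst] at hA; subst hA
            exact hg _ (hσ 0) _)
        (by intro A hA; simp [gsubst] at hA; subst hA
            exact hg _ (hσ 0) _)
        GroundRef.nil
  · intro hset
    have hmem : aT ∈ {t : L13.Term ℕ | ∃ θ, SLD P13 [qAtom (Term.var 0)] θ ∧ θ 0 = t} := by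
      rw [← hset]; exact hpa
    obtain ⟨θ, hθ, h0⟩ := hmem
    obtain ⟨y, hy⟩ := hqall θ hθ
    rw [h0] at hy
    exact absurd hy (by simp [aT])
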